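/- Rural Hospitals / Lone Wolf consequence in the special case of non-binding capacities: if every hospital's capacity is at least the number of residents, then in every stable matching the set of matched residents is the same; in particular, if some stable matching matches all residents, then every stable matching matches all residents. -/
import Mathlib

private lemma stmt13aux {A C : Type*} [Fintype A] [DecidableEq C]
    (acc : A → C → Prop) (UA : A → C → ℝ) (q : C → ℕ) (UC : C → A → ℝ)
    (hq : ∀ c, Fintype.card A ≤ q c)
    (M₁ M₂ : A → Option C)
    (hacc₂ : ∀ a c, M₂ a = some c → acc a c)
    (hstable₁ : ∀ a c, acc a c →
      ¬ ((M₁ a = none ∨ ∃ c', M₁ a = some c' ∧ UA a c > UA a c') ∧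
        ((Finset.univ.filter (fun a' => M₁ a' = some c)).card < q c ∨
          ∃ a' ∈ Finset.univ.filter (fun a' => M₁ a' = some c), UC c a > UC c a'))) :
    ∀ a, (M₂ a).isSome → (M₁ a).isSome := by
  classical
  intro a h2
  by_contra h1
  have hnone : M₁ a = none := by
    cases hM : M₁ a with
    | none => rfl
    | some c => simp [hM] at h1
  obtain ⟨c, hM2⟩ := Option.isSome_iff_exists.mp h2
  have hac := hacc₂ a c hM2
  refine hstable₁ a c hac ⟨Or.inl hnone, Or.inl ?_⟩
  have hsub : (Finset.univ.filter (fun a' => M₁ a' = some c)) ⊆ Finset.univ.erase a := by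
    intro x hx
    simp only [Finset.mem_filter] at hx
    refine Finset.mem_erase.mpr ⟨?_, Finset.mem_univ x⟩
    rintro rfl
    rw [hnone] at hx
    simp at hx
  calc (Finset.univ.filter (fun a' => M₁ a' = some c)).card
      ≤ (Finset.univ.erase a).card := Finset.card_le_card hsub
    _ < Finset.univ.card := Finset.card_erase_lt_of_mem (Finset.mem_univ a)
    _ = Fintype.card A := Finset.card_univ
    _ ≤ q c := hq c

/-- Rural Hospitals theorem (first part) specialized to
non-binding capacities q_c ≥ |A|: every stable matching matches the same set of
residents; in particular if some stable matching matches all residents, then so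
does every stable matching. -/
theorem stmt13 {A C : Type*} [Fintype A] [DecidableEq C]
    (acc : A → C → Prop) (UA : A → C → ℝ) (UC : C → A → ℝ) (q : C → ℕ)
    (hq : ∀ c, Fintype.card A ≤ q c)
    (hUA : ∀ a, Function.Injective (UA a))
    (hUC : ∀ c, Function.Injective (UC c))
    (M₁ M₂ : A → Option C)
    (hacc₁ : ∀ a c, M₁ a = some c → acc a c)
    (hacc₂ : ∀ a c, M₂ a = some c → acc a c)
    (hcap₁ : ∀ c, (Finset.univ.filter (fun a => M₁ a = some c)).card ≤ q c)
    (hcap₂ : ∀ c, (Finset.univ.filter (fun a => M₂ a = some c)).card ≤ q c)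
    -- stability: no blocking pair
    (hstable₁ : ∀ a c, acc a c →
      ¬ ((M₁ a = none ∨ ∃ c', M₁ a = some c' ∧ UA a c > UA a c') ∧
        ((Finset.univ.filter (fun a' => M₁ a' = some c)).card < q c ∨
          ∃ a' ∈ Finset.univ.filter (fun a' => M₁ a' = some c), UC c a > UC c a')))
    (hstable₂ : ∀ a c, acc a c →
      ¬ ((M₂ a = none ∨ ∃ c', M₂ a = some c' ∧ UA a c > UA a c') ∧
        ((Finset.univ.filter (fun a' => M₂ a' = some c)).card < q c ∨
          ∃ a' ∈ Finset.univ.filter (fun a' => M₂ a' = some c), UC c a > UC c a'))) :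
    (∀ a, (M₁ a).isSome ↔ (M₂ a).isSome) ∧
    ((∀ a, (M₁ a).isSome) → ∀ a, (M₂ a).isSome) := by
  have h12 := stmt13aux acc UA q UC hq M₂ M₁ hacc₁ hstable₂
  have h21 := stmt13aux acc UA q UC hq M₁ M₂ hacc₂ hstable₁
  exact ⟨fun a => ⟨h12 a, h21 a⟩, fun h a => h12 a (h a)⟩
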